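/- Let H ≤ K ≤ G. Then the G-conjugacy classes contained in K whose centralizing subgroup H·C_G(g) equals K are equally distributed among the cosets of H in K; that is, each coset of H contained in K contains the same number of such classes. -/
import Mathlib

open Finset
open scoped Pointwise

attribute [local instance] Classical.propDecidable

namespace Stmt6Aux

variable {G : Type*} [Group G]

/-- weight: the cardinality of `C_G(g) ⊓ H` -/
noncomputable def w (H : Subgroup G) (g : G) : ℕ :=
  Nat.card (Subgroup.centralizer {g} ⊓ H : Subgroup G)

/-- the centralizing subgroup `H ⊔ C_G(g)` -/
noncomputable def L (H : Subgroup G) (g : G) : Subgroup G := H ⊔ Subgroup.centralizer {g}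

/-- the class-membership predicate -/
def P (H K : Subgroup G) (u : G) (g : G) : Prop :=
  (g : G ⧸ H) = (u : G ⧸ H) ∧ L H g = K

section FintypeG

variable [Fintype G]

noncomputable def M (H K : Subgroup G) (u : G) : ℕ :=
  ∑ g : G, if ((g : G ⧸ H) = (u : G ⧸ H) ∧ L H g = K) then w H g else 0

noncomputable def f (H K : Subgroup G) (u : G) : ℕ :=
  ∑ g : G, if ((g : G ⧸ H) = (u : G ⧸ H) ∧ K ≤ L H g) then w H g else 0

/-- counting the elements of a coset of `H` inside a subgroup `C`. -/
lemma count_inter (H : Subgroup G) [H.Normal] (C : Subgroup G) (z : G) :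
    (univ.filter fun c : G => ((c : G ⧸ H) = (z : G ⧸ H) ∧ c ∈ C)).card
      = if z ∈ H ⊔ C then Nat.card (C ⊓ H : Subgroup G) else 0 := by
  split_ifs with hz
  · -- z ∈ H ⊔ C = C ⊔ H, write z = c₀ * h
    have hz' : z ∈ (C : Set G) * (H : Set G) := by
      rw [← Subgroup.mul_normal C H, SetLike.mem_coe, ← sup_comm]; exact hz
    obtain ⟨c₀, hc₀, h, hh, rfl⟩ := hz'
    have hfil : (univ.filter fun c : G => ((c : G ⧸ H) = ((c₀ * h : G) : G ⧸ H) ∧ c ∈ C))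
        = Finset.image (fun d : G => c₀ * d) (univ.filter fun d : G => d ∈ C ⊓ H) := by
      ext c
      simp only [Finset.mem_filter, Finset.mem_image, Finset.mem_univ, true_and,
        Subgroup.mem_inf]
      constructor
      · rintro ⟨hc1, hc2⟩
        refine ⟨c₀⁻¹ * c, ⟨mul_mem (inv_mem hc₀) hc2, ?_⟩, by group⟩
        have hch : ((h : G) : G ⧸ H) = 1 := (QuotientGroup.eq_one_iff h).mpr hh
        have hcc : ((c : G) : G ⧸ H) = ((c₀ : G) : G ⧸ H) := by
          rw [hc1, QuotientGroup.mk_mul, hch, mul_one]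
        have : ((c₀⁻¹ * c : G) : G ⧸ H) = 1 := by
          rw [QuotientGroup.mk_mul, QuotientGroup.mk_inv, hcc]; group
        exact (QuotientGroup.eq_one_iff _).mp this
      · rintro ⟨d, ⟨hdC, hdH⟩, rfl⟩
        constructor
        · have h1 : ((d : G) : G ⧸ H) = 1 := (QuotientGroup.eq_one_iff d).mpr hdH
          have h2 : ((h : G) : G ⧸ H) = 1 := (QuotientGroup.eq_one_iff h).mpr hh
          rw [QuotientGroup.mk_mul, QuotientGroup.mk_mul, h1, h2, mul_one]
        · exact mul_mem hc₀ hdC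
    rw [hfil, Finset.card_image_of_injective _ (mul_right_injective c₀),
      Nat.card_eq_fintype_card, Fintype.card_subtype]
  · rw [Finset.card_eq_zero, Finset.filter_eq_empty_iff]
    rintro c - ⟨hc1, hc2⟩
    exact hz (by
      have hcz : c⁻¹ * z ∈ H := by
        apply (QuotientGroup.eq_one_iff _).mp
        rw [QuotientGroup.mk_mul, QuotientGroup.mk_inv, ← hc1]; group
      have hzc : z = c * (c⁻¹ * z) := by group
      rw [hzc]
      exact mul_mem ((le_sup_right : C ≤ H ⊔ C) hc2) ((le_sup_left : H ≤ H ⊔ C) hcz))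

lemma sup_zpowers_congr (H : Subgroup G) [H.Normal] {c z : G}
    (h : (c : G ⧸ H) = (z : G ⧸ H)) :
    H ⊔ Subgroup.zpowers c = H ⊔ Subgroup.zpowers z := by
  have key : ∀ a b : G, (a : G ⧸ H) = (b : G ⧸ H) →
      Subgroup.zpowers a ≤ H ⊔ Subgroup.zpowers b := by
    intro a b hab
    rw [Subgroup.zpowers_le]
    have h1 : a * b⁻¹ ∈ H := by
      apply (QuotientGroup.eq_one_iff _).mp
      rw [QuotientGroup.mk_mul, QuotientGroup.mk_inv, hab]; group
    have h2 : a = (a * b⁻¹) * b := by group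
    rw [h2]
    exact mul_mem ((le_sup_left : H ≤ H ⊔ Subgroup.zpowers b) h1)
      ((le_sup_right : Subgroup.zpowers b ≤ H ⊔ Subgroup.zpowers b) (Subgroup.mem_zpowers b))
  exact le_antisymm (sup_le le_sup_left (key c z h)) (sup_le le_sup_left (key z c h.symm))

/-- the double-counting identity: `f H (H ⊔ ⟨z⟩) x` does not depend on
`x ∈ H ⊔ ⟨z⟩`. -/
lemma f_const (H : Subgroup G) [H.Normal] (z x : G)
    (hx : x ∈ H ⊔ Subgroup.zpowers z) :
    f H (H ⊔ Subgroup.zpowers z) x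
      = ∑ c : G, if (c : G ⧸ H) = (z : G ⧸ H) then w H c else 0 := by
  set K := H ⊔ Subgroup.zpowers z with hK
  have hzmem : ∀ g : G, (K ≤ H ⊔ Subgroup.centralizer {g}
      ↔ z ∈ H ⊔ Subgroup.centralizer {g}) := by
    intro g
    constructor
    · intro h
      exact h ((le_sup_right : Subgroup.zpowers z ≤ K) (Subgroup.mem_zpowers z))
    · intro h
      exact sup_le le_sup_left (Subgroup.zpowers_le.mpr h)
  have e1 : f H K x = ∑ g : G, ∑ c : G,
      if (((g : G ⧸ H) = (x : G ⧸ H)) ∧ ((c : G ⧸ H) = (z : G ⧸ H)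
        ∧ c ∈ Subgroup.centralizer {g})) then 1 else 0 := by
    unfold f L
    refine Finset.sum_congr rfl fun g _ => ?_
    by_cases hg : (g : G ⧸ H) = (x : G ⧸ H)
    · simp only [hg, true_and]
      rw [Finset.sum_boole]
      push_cast
      rw [count_inter H (Subgroup.centralizer {g}) z]
      rcases (em (z ∈ H ⊔ Subgroup.centralizer ({g} : Set G))) with h1 | h1
      · rw [if_pos h1, if_pos ((hzmem g).mpr h1)]
        rfl
      · rw [if_neg h1, if_neg (fun h2 => h1 ((hzmem g).mp h2))]
    · simp [hg]
  have e2 : (∑ c : G, if (c : G ⧸ H) = (z : G ⧸ H) then w H c else 0)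
      = ∑ g : G, ∑ c : G,
      if (((g : G ⧸ H) = (x : G ⧸ H)) ∧ ((c : G ⧸ H) = (z : G ⧸ H)
        ∧ c ∈ Subgroup.centralizer {g})) then 1 else 0 := by
    rw [Finset.sum_comm]
    refine Finset.sum_congr rfl fun c _ => ?_
    by_cases hc : (c : G ⧸ H) = (z : G ⧸ H)
    · rw [if_pos hc]
      symm
      have hiff : ∀ g : G, ((((g : G ⧸ H) = (x : G ⧸ H)) ∧ ((c : G ⧸ H) = (z : G ⧸ H)
          ∧ c ∈ Subgroup.centralizer {g}))
          ↔ (((g : G ⧸ H) = (x : G ⧸ H)) ∧ g ∈ Subgroup.centralizer {c})) := by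
        intro g
        have hcomm : (c ∈ Subgroup.centralizer ({g} : Set G)
            ↔ g ∈ Subgroup.centralizer ({c} : Set G)) := by
          rw [Subgroup.mem_centralizer_singleton_iff, Subgroup.mem_centralizer_singleton_iff]
          exact eq_comm
        rw [hcomm]
        tauto
      have hx' : x ∈ H ⊔ Subgroup.centralizer ({c} : Set G) := by
        have h1 : H ⊔ Subgroup.zpowers c = K := by
          rw [hK, sup_zpowers_congr H hc]
        have h2 : H ⊔ Subgroup.zpowers c ≤ H ⊔ Subgroup.centralizer ({c} : Set G) :=
          sup_le le_sup_left
            ((Subgroup.zpowers_le.mpr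
              (Subgroup.mem_centralizer_singleton_iff.mpr rfl)).trans le_sup_right)
        exact h2 (h1 ▸ hx)
      calc (∑ g : G, if (((g : G ⧸ H) = (x : G ⧸ H)) ∧ ((c : G ⧸ H) = (z : G ⧸ H)
          ∧ c ∈ Subgroup.centralizer {g})) then 1 else 0)
          = ∑ g : G, if (((g : G ⧸ H) = (x : G ⧸ H))
              ∧ g ∈ Subgroup.centralizer {c}) then 1 else 0 := by
            refine Finset.sum_congr rfl fun g _ => ?_
            rw [if_congr (hiff g) rfl rfl]
        _ = ((univ.filter fun g : G => ((g : G ⧸ H) = (x : G ⧸ H)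
              ∧ g ∈ Subgroup.centralizer {c})).card : ℕ) := by
            rw [Finset.sum_boole]
            push_cast
            rfl
        _ = w H c := by
            rw [count_inter H (Subgroup.centralizer {c}) x, if_pos hx']
            rfl
    · rw [if_neg hc]
      symm
      apply Finset.sum_eq_zero
      intro g _
      rw [if_neg]
      tauto
  rw [e1, ← e2]

lemma f_eq_sum_M [Fintype (Subgroup G)] (H K : Subgroup G) (x : G) :
    f H K x = ∑ L' : Subgroup G, if K ≤ L' then M H L' x else 0 := by
  have step1 : ∀ L' : Subgroup G, (if K ≤ L' then M H L' x else 0)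
      = ∑ g : G, if (((g : G ⧸ H) = (x : G ⧸ H) ∧ L H g = L') ∧ K ≤ L')
          then w H g else 0 := by
    intro L'
    split_ifs with h
    · unfold M
      refine Finset.sum_congr rfl fun g _ => ?_
      by_cases h2 : ((g : G ⧸ H) = (x : G ⧸ H) ∧ L H g = L')
      · rw [if_pos h2, if_pos ⟨h2, h⟩]
      · rw [if_neg h2, if_neg (fun hh => h2 hh.1)]
    · symm; apply Finset.sum_eq_zero; intro g _; rw [if_neg]; tauto
  rw [Finset.sum_congr rfl fun L' _ => step1 L', Finset.sum_comm]
  unfold f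
  refine Finset.sum_congr rfl fun g _ => ?_
  have step2 : ∀ L' : Subgroup G,
      (if (((g : G ⧸ H) = (x : G ⧸ H) ∧ L H g = L') ∧ K ≤ L') then w H g else 0)
      = if L' = L H g then
          (if ((g : G ⧸ H) = (x : G ⧸ H) ∧ K ≤ L H g) then w H g else 0) else 0 := by
    intro L'
    by_cases h1 : L' = L H g
    · subst h1
      by_cases h2 : ((g : G ⧸ H) = (x : G ⧸ H) ∧ K ≤ L H g)
      · rw [if_pos rfl, if_pos h2, if_pos ⟨⟨h2.1, rfl⟩, h2.2⟩]
      · rw [if_pos rfl, if_neg h2, if_neg]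
        rintro ⟨⟨hc, -⟩, hk⟩
        exact h2 ⟨hc, hk⟩
    · rw [if_neg h1, if_neg]
      rintro ⟨⟨-, hL⟩, -⟩
      exact h1 hL.symm
  rw [Finset.sum_congr rfl fun L' _ => step2 L', Fintype.sum_ite_eq' (L H g)]

lemma exists_gen (H : Subgroup G) [H.Normal] (hcyc : IsCyclic (G ⧸ H)) (K : Subgroup G)
    (hHK : H ≤ K) : ∃ z ∈ K, H ⊔ Subgroup.zpowers z = K := by
  haveI := hcyc
  haveI : IsCyclic (K.map (QuotientGroup.mk' H)) := Subgroup.isCyclic _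
  obtain ⟨ζ, hζ⟩ := IsCyclic.exists_generator (α := K.map (QuotientGroup.mk' H))
  obtain ⟨z, hzK, hz⟩ := Subgroup.mem_map.mp ζ.2
  refine ⟨z, hzK, ?_⟩
  have hmap : (H ⊔ Subgroup.zpowers z).map (QuotientGroup.mk' H)
      = K.map (QuotientGroup.mk' H) := by
    rw [Subgroup.map_sup]
    have h1 : H.map (QuotientGroup.mk' H) = ⊥ := by
      rw [Subgroup.map_eq_bot_iff, QuotientGroup.ker_mk']
    rw [h1, bot_sup_eq, MonoidHom.map_zpowers, hz]
    apply le_antisymm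
    · rw [Subgroup.zpowers_le]
      exact ζ.2
    · intro q hq
      obtain ⟨n, hn⟩ := Subgroup.mem_zpowers_iff.mp (hζ ⟨q, hq⟩)
      refine Subgroup.mem_zpowers_iff.mpr ⟨n, ?_⟩
      have hval := congrArg Subtype.val hn
      push_cast at hval
      exact hval
  have hcm := congrArg (Subgroup.comap (QuotientGroup.mk' H)) hmap
  rw [Subgroup.comap_map_eq, Subgroup.comap_map_eq, QuotientGroup.ker_mk'] at hcm
  rw [sup_eq_left.mpr le_sup_left, sup_eq_left.mpr hHK] at hcm
  exact hcm

lemma card_lt_of_lt {K L' : Subgroup G} (h : K < L') : Nat.card K < Nat.card L' := by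
  have h1 : (K : Set G) ⊂ (L' : Set G) := by
    rw [Set.ssubset_iff_of_subset (by exact_mod_cast h.le)]
    obtain ⟨a, haL, haK⟩ := SetLike.exists_of_lt h
    exact ⟨a, haL, haK⟩
  calc Nat.card K = (K : Set G).ncard := by
        rw [← Nat.card_coe_set_eq]; rfl
    _ < (L' : Set G).ncard := Set.ncard_lt_ncard h1 (Set.toFinite _)
    _ = Nat.card L' := by rw [← Nat.card_coe_set_eq]; rfl

lemma M_const [Fintype (Subgroup G)] (H : Subgroup G) [H.Normal]
    (hcyc : IsCyclic (G ⧸ H)) :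
    ∀ (K : Subgroup G), H ≤ K → ∀ x ∈ K, ∀ y ∈ K, M H K x = M H K y := by
  have main : ∀ n : ℕ, ∀ K : Subgroup G, Fintype.card G - Nat.card K ≤ n →
      H ≤ K → ∀ x ∈ K, ∀ y ∈ K, M H K x = M H K y := by
    intro n
    induction n using Nat.strong_induction_on with
    | _ n ih =>
      intro K hcard hHK x hx y hy
      -- strictly larger subgroups: induction hypothesis
      have hstrict : ∀ L' : Subgroup G, K < L' → M H L' x = M H L' y := by
        intro L' hKL
        have h1 : Nat.card K < Nat.card L' := card_lt_of_lt hKL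
        have h2 : Nat.card L' ≤ Nat.card G := Subgroup.card_le_card_group L'
        have h3 : Nat.card G = Fintype.card G := Nat.card_eq_fintype_card
        have h4 : Fintype.card G - Nat.card L' < n := by omega
        exact ih _ h4 L' le_rfl (hHK.trans hKL.le) x (hKL.le hx) y (hKL.le hy)
      -- f = M K + strict part
      have hsplit : ∀ u : G, f H K u = M H K u
          + ∑ L' : Subgroup G, if K < L' then M H L' u else 0 := by
        intro u
        rw [f_eq_sum_M]
        have hsplit' : ∀ L' : Subgroup G, (if K ≤ L' then M H L' u else 0)
            = (if L' = K then M H L' u else 0) + (if K < L' then M H L' u else 0) := by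
          intro L'
          by_cases h1 : L' = K
          · subst h1
            simp [lt_irrefl]
          · by_cases h2 : K < L'
            · rw [if_pos h2.le, if_neg h1, if_pos h2, zero_add]
            · rw [if_neg, if_neg h1, if_neg h2, add_zero]
              intro hle
              exact h2 (lt_of_le_of_ne hle (fun h => h1 h.symm))
        rw [Finset.sum_congr rfl fun L' _ => hsplit' L', Finset.sum_add_distrib,
          Fintype.sum_ite_eq' K (fun L' => M H L' u)]
      -- equality of f
      obtain ⟨z, hzK, hzgen⟩ := exists_gen H hcyc K hHK
      have hf : f H K x = f H K y := by
        rw [← hzgen] at hx hy ⊢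
        rw [f_const H z x hx, f_const H z y hy]
      have hx' := hsplit x
      have hy' := hsplit y
      have hsum : (∑ L' : Subgroup G, if K < L' then M H L' x else 0)
          = ∑ L' : Subgroup G, if K < L' then M H L' y else 0 := by
        refine Finset.sum_congr rfl fun L' _ => ?_
        split_ifs with h
        · exact hstrict L' h
        · rfl
      omega
  intro K hHK x hx y hy
  exact main (Fintype.card G - Nat.card K) K le_rfl hHK x hx y hy

/-- an equivalence between the centralizer and the `ConjAct` stabilizer -/
noncomputable def centEquivStab (g : G) :
    Subgroup.centralizer ({g} : Set G) ≃ MulAction.stabilizer (ConjAct G) g where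
  toFun c := ⟨ConjAct.toConjAct (c : G), by
    rw [MulAction.mem_stabilizer_iff, ConjAct.smul_def, ConjAct.ofConjAct_toConjAct]
    have hc := Subgroup.mem_centralizer_singleton_iff.mp c.2
    rw [hc]; group⟩
  invFun s := ⟨ConjAct.ofConjAct (s : ConjAct G), by
    have hs := MulAction.mem_stabilizer_iff.mp s.2
    rw [ConjAct.smul_def] at hs
    rw [Subgroup.mem_centralizer_singleton_iff]
    have h2 := congrArg (· * (ConjAct.ofConjAct (s : ConjAct G))) hs
    simpa [mul_assoc] using h2⟩
  left_inv c := Subtype.ext (by simp)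
  right_inv s := Subtype.ext (by simp)

/-- counting conjugacy classes all of whose elements satisfy a
conjugation-closed predicate -/
lemma class_count (p : G → Prop) (hp : ∀ t g, p g → p (t * g * t⁻¹)) :
    Nat.card {C : ConjClasses G // ∀ g ∈ C.carrier, p g} * Fintype.card G
      = ∑ g : G, if p g then Nat.card (Subgroup.centralizer ({g} : Set G)) else 0 := by
  haveI : Fintype (ConjClasses G) := Fintype.ofFinite _
  rw [← Finset.sum_fiberwise univ (fun g => ConjClasses.mk g)
    (fun g => if p g then Nat.card (Subgroup.centralizer ({g} : Set G)) else 0)]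
  have key : ∀ C : ConjClasses G,
      (∑ g ∈ univ.filter (fun g : G => ConjClasses.mk g = C),
        if p g then Nat.card (Subgroup.centralizer ({g} : Set G)) else 0)
      = if (∀ g ∈ C.carrier, p g) then Fintype.card G else 0 := by
    intro C
    obtain ⟨g₀, hg₀⟩ := C.exists_rep
    set s := univ.filter (fun g : G => ConjClasses.mk g = C) with hs
    have hmem : ∀ g : G, g ∈ s ↔ g ∈ C.carrier := by
      intro g
      rw [hs, Finset.mem_filter, ConjClasses.mem_carrier_iff_mk_eq]
      simp
    have hg₀s : g₀ ∈ s := by rw [hmem, ConjClasses.mem_carrier_iff_mk_eq]; exact hg₀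
    have hcard0 : s.card ≠ 0 := Finset.card_ne_zero_of_mem hg₀s
    -- orbit-stabilizer per element
    have hos : ∀ g ∈ s, Nat.card (Subgroup.centralizer ({g} : Set G)) * s.card
        = Fintype.card G := by
      intro g hg
      have hC : ConjClasses.mk g = C := (Finset.mem_filter.mp hg).2
      have horb : Fintype.card (MulAction.orbit (ConjAct G) g) = s.card := by
        rw [hs, ← Fintype.card_subtype]
        apply Fintype.card_congr
        apply Equiv.subtypeEquivRight
        intro g'
        rw [ConjAct.orbit_eq_carrier_conjClasses, hC, ConjClasses.mem_carrier_iff_mk_eq]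
      have hstab : Nat.card (Subgroup.centralizer ({g} : Set G))
          = Fintype.card (MulAction.stabilizer (ConjAct G) g) := by
        rw [Nat.card_eq_fintype_card]
        exact Fintype.card_congr (centEquivStab g)
      have hOS := MulAction.card_orbit_mul_card_stabilizer_eq_card_group (ConjAct G) g
      rw [horb, ← hstab] at hOS
      rw [mul_comm, hOS]
      rfl
    by_cases hall : ∀ g ∈ C.carrier, p g
    · rw [if_pos hall]
      have hdvd : s.card ∣ Fintype.card G :=
        ⟨Nat.card (Subgroup.centralizer ({g₀} : Set G)),
          by rw [← hos g₀ hg₀s]; ring⟩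
      calc (∑ g ∈ s, if p g then Nat.card (Subgroup.centralizer ({g} : Set G)) else 0)
          = ∑ _g ∈ s, Fintype.card G / s.card := by
            refine Finset.sum_congr rfl fun g hg => ?_
            rw [if_pos (hall g ((hmem g).mp hg))]
            exact (Nat.div_eq_of_eq_mul_left (Nat.pos_of_ne_zero hcard0)
              (hos g hg).symm).symm
        _ = s.card * (Fintype.card G / s.card) := by
            rw [Finset.sum_const, smul_eq_mul]
        _ = Fintype.card G := Nat.mul_div_cancel' hdvd
    · rw [if_neg hall]
      apply Finset.sum_eq_zero
      intro g hg
      rw [if_neg]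
      intro hpg
      apply hall
      intro g' hg'
      have h1 : ConjClasses.mk g = ConjClasses.mk g' := by
        rw [(Finset.mem_filter.mp hg).2, eq_comm, ← ConjClasses.mem_carrier_iff_mk_eq]
        exact hg'
      obtain ⟨t, ht⟩ := isConj_iff.mp (ConjClasses.mk_eq_mk_iff_isConj.mp h1)
      rw [← ht]
      exact hp t g hpg
  rw [Finset.sum_congr rfl fun C _ => key C]
  rw [Finset.sum_ite, Finset.sum_const_zero, add_zero, Finset.sum_const, smul_eq_mul]
  congr 1
  rw [Nat.card_eq_fintype_card, Fintype.card_subtype]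

/-- the product formula `|H ⊔ C| * |C ⊓ H| = |C| * |H|` for `H` normal. -/
lemma prod_formula (H C : Subgroup G) [H.Normal] :
    Nat.card (H ⊔ C : Subgroup G) * Nat.card (C ⊓ H : Subgroup G)
      = Nat.card C * Nat.card H := by
  have hA : Nat.card (H.subgroupOf (C ⊔ H)) * H.relIndex (C ⊔ H)
      = Nat.card (C ⊔ H : Subgroup G) :=
    Subgroup.card_mul_index (H.subgroupOf (C ⊔ H))
  have hB : Nat.card (H.subgroupOf C) * H.relIndex C = Nat.card C :=
    Subgroup.card_mul_index (H.subgroupOf C)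
  have hC : H.relIndex (C ⊔ H) = H.relIndex C := Subgroup.relIndex_sup_right C H
  have hD : Nat.card (H.subgroupOf (C ⊔ H)) = Nat.card H :=
    Nat.card_congr (Subgroup.subgroupOfEquivOfLe (le_sup_right : H ≤ C ⊔ H)).toEquiv
  have hE : Nat.card (H.subgroupOf C) = Nat.card (C ⊓ H : Subgroup G) := by
    apply Nat.card_congr
    exact {
      toFun := fun c => ⟨c.1.1, Subgroup.mem_inf.mpr ⟨c.1.2, Subgroup.mem_subgroupOf.mp c.2⟩⟩
      invFun := fun g => ⟨⟨g.1, (Subgroup.mem_inf.mp g.2).1⟩,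
        Subgroup.mem_subgroupOf.mpr (Subgroup.mem_inf.mp g.2).2⟩
      left_inv := fun _ => rfl
      right_inv := fun _ => rfl }
  have hsup : (H ⊔ C : Subgroup G) = C ⊔ H := sup_comm H C
  rw [hsup, ← hA, hD, hC, ← hB, hE]
  ring

end FintypeG

lemma map_conj_centralizer (t g : G) :
    (Subgroup.centralizer ({g} : Set G)).map (MulAut.conj t).toMonoidHom
      = Subgroup.centralizer ({t * g * t⁻¹} : Set G) := by
  have key : ∀ a b : G, (t * a * t⁻¹) * (t * b * t⁻¹) = t * (a * b) * t⁻¹ := by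
    intro a b; group
  ext x
  simp only [Subgroup.mem_map, Subgroup.mem_centralizer_singleton_iff]
  constructor
  · rintro ⟨c, hc, rfl⟩
    have hconj : (MulAut.conj t).toMonoidHom c = t * c * t⁻¹ := rfl
    rw [hconj, key, key, hc]
  · intro hx
    refine ⟨t⁻¹ * x * t, ?_, ?_⟩
    · have h1 : x * (t * g * t⁻¹) = (t * g * t⁻¹) * x := hx
      have h2 := congrArg (fun u => t⁻¹ * u * t) h1
      simpa [mul_assoc] using h2
    · show t * (t⁻¹ * x * t) * t⁻¹ = x
      group

lemma map_conj_eq_of_forall (S : Subgroup G) (hS : ∀ t : G, ∀ s ∈ S, t * s * t⁻¹ ∈ S)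
    (t : G) : S.map (MulAut.conj t).toMonoidHom = S := by
  ext x
  simp only [Subgroup.mem_map]
  constructor
  · rintro ⟨s, hs, rfl⟩
    exact hS t s hs
  · intro hx
    have h1 : t⁻¹ * x * t ∈ S := by
      have := hS t⁻¹ x hx
      simpa using this
    refine ⟨t⁻¹ * x * t, h1, ?_⟩
    show t * (t⁻¹ * x * t) * t⁻¹ = x
    group

lemma L_conj (H : Subgroup G) [H.Normal] (K : Subgroup G)
    (hn : ∀ t : G, ∀ k ∈ K, t * k * t⁻¹ ∈ K) (t g : G) (h : L H g = K) :
    L H (t * g * t⁻¹) = K := by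
  have h1 : L H (t * g * t⁻¹) = (L H g).map (MulAut.conj t).toMonoidHom := by
    unfold L
    rw [Subgroup.map_sup, map_conj_centralizer,
      map_conj_eq_of_forall H (fun t' s hs => Subgroup.Normal.conj_mem ‹H.Normal› s hs t') t]
  rw [h1, h, map_conj_eq_of_forall K hn t]

lemma normal_of_class (H K : Subgroup G) [H.Normal] (C : ConjClasses G)
    (hcent : ∀ g ∈ C.carrier, H ⊔ Subgroup.centralizer {g} = K) :
    ∀ t : G, ∀ k ∈ K, t * k * t⁻¹ ∈ K := by
  obtain ⟨g, hg⟩ := C.exists_rep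
  have hgC : g ∈ C.carrier := ConjClasses.mem_carrier_iff_mk_eq.mpr hg
  have hgK : H ⊔ Subgroup.centralizer {g} = K := hcent g hgC
  intro t k hk
  have hg' : t * g * t⁻¹ ∈ C.carrier := by
    rw [ConjClasses.mem_carrier_iff_mk_eq, ← hg, ConjClasses.mk_eq_mk_iff_isConj]
    exact isConj_iff.mpr ⟨t⁻¹, by group⟩
  have hK' : H ⊔ Subgroup.centralizer {t * g * t⁻¹} = K := hcent _ hg'
  rw [← hgK, ← SetLike.mem_coe, Subgroup.normal_mul] at hk
  obtain ⟨h, hh, c, hc, rfl⟩ := hk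
  have h1 : t * h * t⁻¹ ∈ H := Subgroup.Normal.conj_mem ‹H.Normal› h hh t
  have h2 : t * c * t⁻¹ ∈ Subgroup.centralizer ({t * g * t⁻¹} : Set G) := by
    rw [Subgroup.mem_centralizer_singleton_iff]
    have hc' := Subgroup.mem_centralizer_singleton_iff.mp hc
    have key : ∀ a b : G, (t * a * t⁻¹) * (t * b * t⁻¹) = t * (a * b) * t⁻¹ := by
      intro a b; group
    rw [key, key, hc']
  have h3 : t * (h * c) * t⁻¹ = (t * h * t⁻¹) * (t * c * t⁻¹) := by group
  rw [h3, ← hK']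
  exact mul_mem ((le_sup_left : H ≤ _) h1)
    ((le_sup_right : Subgroup.centralizer ({t * g * t⁻¹} : Set G) ≤ _) h2)

end Stmt6Aux

open Stmt6Aux

/-- Main theorem: let `H ⊴ G` with `G/H` cyclic, and `H ≤ K ≤ G`. Then the
`G`-conjugacy classes contained in `K` whose centralizing subgroup `H·C_G(g)`
equals `K` are equally distributed among the cosets of `H` in `K`: any two cosets
of `H` contained in `K` contain the same number of such classes. -/
theorem stmt6 {G : Type*} [Group G] [Finite G] (H : Subgroup G) [H.Normal]
    (hcyc : IsCyclic (G ⧸ H)) (K : Subgroup G) (hHK : H ≤ K) :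
    ∀ x ∈ K, ∀ y ∈ K,
      Nat.card {C : ConjClasses G //
          C.carrier ⊆ {g : G | (QuotientGroup.mk g : G ⧸ H) = QuotientGroup.mk x} ∧
          ∀ g ∈ C.carrier, H ⊔ Subgroup.centralizer {g} = K} =
      Nat.card {C : ConjClasses G //
          C.carrier ⊆ {g : G | (QuotientGroup.mk g : G ⧸ H) = QuotientGroup.mk y} ∧
          ∀ g ∈ C.carrier, H ⊔ Subgroup.centralizer {g} = K} := by
  intro x hx y hy
  cases nonempty_fintype G
  haveI : Fintype (Subgroup G) := Fintype.ofFinite _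
  have hcomm : ∀ a b : G ⧸ H, a * b = b * a := by
    letI := hcyc.commGroup
    exact fun a b => mul_comm a b
  by_cases hn : ∀ t : G, ∀ k ∈ K, t * k * t⁻¹ ∈ K
  · -- main case
    have hp : ∀ u : G, ∀ t g : G, P H K u g → P H K u (t * g * t⁻¹) := by
      intro u t g hg
      obtain ⟨h1, h2⟩ := hg
      constructor
      · have hco : ((t * g * t⁻¹ : G) : G ⧸ H) = ((g : G) : G ⧸ H) := by
          rw [QuotientGroup.mk_mul, QuotientGroup.mk_mul, QuotientGroup.mk_inv,
            hcomm ((t : G) : G ⧸ H) ((g : G) : G ⧸ H), mul_inv_cancel_right]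
        rw [hco, h1]
      · exact L_conj H K hn t g h2
    have count : ∀ u : G,
        Nat.card {C : ConjClasses G //
          C.carrier ⊆ {g : G | (QuotientGroup.mk g : G ⧸ H) = QuotientGroup.mk u} ∧
          ∀ g ∈ C.carrier, H ⊔ Subgroup.centralizer {g} = K}
        = Nat.card {C : ConjClasses G // ∀ g ∈ C.carrier, P H K u g} := by
      intro u
      apply Nat.card_congr
      apply Equiv.subtypeEquivRight
      intro C
      constructor
      · rintro ⟨hs, hc⟩ g hg
        exact ⟨hs hg, hc g hg⟩
      · intro h
        exact ⟨fun g hg => (h g hg).1, fun g hg => (h g hg).2⟩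
    have bridge : ∀ u : G,
        (∑ g : G, if P H K u g
          then Nat.card (Subgroup.centralizer ({g} : Set G)) else 0) * Nat.card H
        = Nat.card K * M H K u := by
      intro u
      rw [Finset.sum_mul]
      unfold M
      rw [Finset.mul_sum]
      refine Finset.sum_congr rfl fun g _ => ?_
      by_cases hPg : P H K u g
      · rw [if_pos hPg,
          if_pos (show ((g : G ⧸ H) = (u : G ⧸ H) ∧ L H g = K) from hPg)]
        have hLK : H ⊔ Subgroup.centralizer {g} = K :=
          (show ((g : G ⧸ H) = (u : G ⧸ H) ∧ L H g = K) from hPg).2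
        unfold w
        rw [← hLK, prod_formula H (Subgroup.centralizer {g})]
      · rw [if_neg hPg,
          if_neg (show ¬((g : G ⧸ H) = (u : G ⧸ H) ∧ L H g = K) from hPg),
          zero_mul, mul_zero]
    have hcx := class_count (P H K x) (hp x)
    have hcy := class_count (P H K y) (hp y)
    have hM := M_const H hcyc K hHK x hx y hy
    have hbx := bridge x
    have hby := bridge y
    rw [count x, count y]
    have e1 : Nat.card {C : ConjClasses G // ∀ g ∈ C.carrier, P H K x g}
          * (Fintype.card G * Nat.card H)
        = Nat.card K * M H K x := by
      rw [← mul_assoc, hcx, hbx]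
    have e2 : Nat.card {C : ConjClasses G // ∀ g ∈ C.carrier, P H K y g}
          * (Fintype.card G * Nat.card H)
        = Nat.card K * M H K y := by
      rw [← mul_assoc, hcy, hby]
    have hpos : 0 < Fintype.card G * Nat.card H :=
      Nat.mul_pos Fintype.card_pos Nat.card_pos
    apply Nat.eq_of_mul_eq_mul_right hpos
    rw [e1, e2, hM]
  · -- degenerate case: both sets are empty
    have hempty : ∀ u : G, IsEmpty {C : ConjClasses G //
        C.carrier ⊆ {g : G | (QuotientGroup.mk g : G ⧸ H) = QuotientGroup.mk u} ∧
        ∀ g ∈ C.carrier, H ⊔ Subgroup.centralizer {g} = K} := by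
      intro u
      constructor
      rintro ⟨C, _, hc⟩
      exact hn (normal_of_class H K C hc)
    rw [@Nat.card_of_isEmpty _ (hempty x), @Nat.card_of_isEmpty _ (hempty y)]
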